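/- Let R ∈ ℝ^{n×n} be entrywise nonnegative with ρ(R) < 1, r ∈ ℝ^n_{≥0}, ℓ(x) = Rx + r, and b̃ = (I − R)⁻¹ r. Let f : ℝ^n_{≥0} → ℝ^n_{≥0} be continuous, CNI, and satisfy f(x) ⪯ ℓ(x) for all x ⪰ 0. Suppose β ≻ 0 satisfies ℓ(β) + v ≺ β for some v ⪰ 0. Then b := lim_{k→∞} f^k(β) exists, equals lim_{k→∞} f^k(b̃), and satisfies b ⪯ b̃. -/

import Mathlib

open Matrix Filter

section Helpers

attribute [local instance] Matrix.linftyOpNormedRing Matrix.linftyOpNormedAlgebra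

/-- entry bound for the linfty operator norm -/
private lemma entry_norm_le_cni {n : ℕ} (B : Matrix (Fin n) (Fin n) ℂ) (i j : Fin n) :
    ‖B i j‖ ≤ ‖B‖ := by
  have h1 : ‖B i j‖₊ ≤ ‖B‖₊ := by
    rw [Matrix.linfty_opNNNorm_def]
    refine le_trans ?_ (Finset.le_sup (Finset.mem_univ i))
    exact Finset.single_le_sum (f := fun k => ‖B i k‖₊) (fun k _ => by positivity)
      (Finset.mem_univ j)
  exact h1

/-- If all complex eigenvalues have modulus `< 1`, the entries of the powers tend to zero. -/
private lemma pow_entry_tendsto_cni {n : ℕ} (R : Matrix (Fin n) (Fin n) ℝ)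
    (hρ : ∀ μ ∈ spectrum ℂ (R.map Complex.ofReal), ‖μ‖ < 1) (i j : Fin n) :
    Tendsto (fun m => (R ^ m) i j) atTop (nhds 0) := by
  set A : Matrix (Fin n) (Fin n) ℂ := R.map Complex.ofReal with hA
  haveI : CompleteSpace (Matrix (Fin n) (Fin n) ℂ) := FiniteDimensional.complete ℂ _
  -- the spectral radius is < 1
  have hs : spectralRadius ℂ A < 1 := by
    have hfin : (spectrum ℂ A).Finite := Matrix.finite_spectrum A
    rcases (spectrum ℂ A).eq_empty_or_nonempty with he | hne
    · rw [spectralRadius, he]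
      simp
    · obtain ⟨μ₀, hμ₀, hmax⟩ := Set.Finite.exists_maximalFor (fun μ => ‖μ‖) _ hfin hne
      have hle : spectralRadius ℂ A ≤ ENNReal.ofReal ‖μ₀‖ := by
        refine iSup₂_le fun μ hμ => ?_
        have : ‖μ‖ ≤ ‖μ₀‖ := by
          rcases le_or_gt ‖μ‖ ‖μ₀‖ with h | h
          · exact h
          · exact hmax hμ h.le
        calc (‖μ‖₊ : ENNReal) = ENNReal.ofReal ‖μ‖ := by
              exact (ofReal_norm μ).symm
          _ ≤ ENNReal.ofReal ‖μ₀‖ := ENNReal.ofReal_le_ofReal this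
      exact hle.trans_lt (ENNReal.ofReal_lt_one.mpr (hρ μ₀ hμ₀))
  -- pick c with ρ < c < 1
  obtain ⟨c, hc0, hc1, hc2⟩ := ENNReal.lt_iff_exists_real_btwn.mp hs
  have hcpos : (0:ℝ) ≤ c := hc0
  have hclt1 : c < 1 := by
    have := hc2
    rwa [show (1 : ENNReal) = ENNReal.ofReal 1 by simp, ENNReal.ofReal_lt_ofReal_iff one_pos] at this
  -- Gelfand: eventually ‖A^m‖ ≤ c^m
  have hG := spectrum.pow_norm_pow_one_div_tendsto_nhds_spectralRadius A
  have hev : ∀ᶠ m : ℕ in atTop, ENNReal.ofReal (‖A ^ m‖ ^ (1 / (m:ℝ))) < ENNReal.ofReal c :=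
    hG.eventually_lt_const hc1
  have hev2 : ∀ᶠ m : ℕ in atTop, ‖A ^ m‖ ≤ c ^ m := by
    filter_upwards [hev, eventually_ge_atTop 1] with m hm hm1
    have hnn : 0 ≤ ‖A ^ m‖ ^ (1 / (m:ℝ)) := Real.rpow_nonneg (norm_nonneg _) _
    have hlt : ‖A ^ m‖ ^ (1 / (m:ℝ)) < c := by
      rwa [ENNReal.ofReal_lt_ofReal_iff_of_nonneg hnn] at hm
    have hmne : (m:ℝ) ≠ 0 := by positivity
    have key : ‖A ^ m‖ = (‖A ^ m‖ ^ (1 / (m:ℝ))) ^ (m:ℕ) := by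
      rw [← Real.rpow_natCast (‖A ^ m‖ ^ (1 / (m:ℝ))) m, ← Real.rpow_mul (norm_nonneg _),
        one_div_mul_cancel hmne, Real.rpow_one]
    rw [key]
    exact le_of_lt (pow_lt_pow_left₀ hlt hnn (by omega))
  -- entries of real powers
  have hmap : ∀ m : ℕ, (R ^ m).map Complex.ofReal = A ^ m := by
    intro m
    have : (Complex.ofRealHom.mapMatrix (R ^ m) : Matrix (Fin n) (Fin n) ℂ)
        = (Complex.ofRealHom.mapMatrix R) ^ m := map_pow _ _ _
    exact this
  have habs : ∀ m : ℕ, |(R ^ m) i j| ≤ ‖A ^ m‖ := by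
    intro m
    have h1 : ‖(A ^ m) i j‖ ≤ ‖A ^ m‖ := entry_norm_le_cni _ i j
    have h2 : (A ^ m) i j = Complex.ofReal ((R ^ m) i j) := by
      rw [← hmap m]; rfl
    rwa [h2, Complex.norm_real, Real.norm_eq_abs] at h1
  have hbound : ∀ᶠ m : ℕ in atTop, ‖(R ^ m) i j‖ ≤ c ^ m := by
    filter_upwards [hev2] with m hm
    rw [Real.norm_eq_abs]
    exact (habs m).trans hm
  exact squeeze_zero_norm' hbound (tendsto_pow_atTop_nhds_zero_of_lt_one hcpos hclt1)

end Helpers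

/-- If `f` is a continuous CNI self-map of the orthant with `f(x) ⪯ ℓ(x) = Rx + r`
(`R ⪰ 0`, `ρ(R) < 1`, `r ⪰ 0`) and `β ≻ 0` satisfies `ℓ(β) + v ≺ β` for some `v ⪰ 0`, then
`b = lim f^k(β)` exists, equals `lim f^k(b̃)` with `b̃ = (I − R)⁻¹ r`, and `b ⪯ b̃`. -/
theorem cni_below_affine_limit {n : ℕ} (R : Matrix (Fin n) (Fin n) ℝ)
    (hR : ∀ i j, 0 ≤ R i j)
    (hρ : ∀ μ ∈ spectrum ℂ (R.map Complex.ofReal), ‖μ‖ < 1)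
    (r : Fin n → ℝ) (hr : ∀ i, 0 ≤ r i)
    (ℓ : (Fin n → ℝ) → (Fin n → ℝ)) (hℓ : ∀ x, ℓ x = R.mulVec x + r)
    (btil : Fin n → ℝ) (hb : btil = (1 - R)⁻¹.mulVec r)
    (f : (Fin n → ℝ) → (Fin n → ℝ))
    (hmap : ∀ x, (∀ i, 0 ≤ x i) → ∀ i, 0 ≤ f x i)
    (hcont : ContinuousOn f {x | ∀ i, 0 ≤ x i})
    (hCNI : ∀ x y, (∀ i, 0 ≤ x i) → (∀ i, x i ≤ y i) → ∀ i, f x i ≤ f y i)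
    (hfℓ : ∀ x, (∀ i, 0 ≤ x i) → ∀ i, f x i ≤ ℓ x i)
    (β : Fin n → ℝ) (hβ : ∀ i, 0 < β i)
    (v : Fin n → ℝ) (hv : ∀ i, 0 ≤ v i) (hβv : ∀ i, ℓ β i + v i < β i) :
    ∃ b : Fin n → ℝ,
      Filter.Tendsto (fun k => f^[k] β) Filter.atTop (nhds b) ∧
      Filter.Tendsto (fun k => f^[k] btil) Filter.atTop (nhds b) ∧
      ∀ i, b i ≤ btil i := by
  classical
  -- basic facts about nonnegative matrices
  have hpow_nonneg : ∀ m : ℕ, ∀ i j, 0 ≤ (R ^ m) i j := by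
    intro m
    induction m with
    | zero => intro i j; by_cases h : i = j <;> simp [pow_zero, Matrix.one_apply, h]
    | succ m ih =>
      intro i j
      rw [pow_succ, Matrix.mul_apply]
      exact Finset.sum_nonneg fun k _ => mul_nonneg (ih i k) (hR k j)
  have hmulVec_mono : ∀ (M : Matrix (Fin n) (Fin n) ℝ), (∀ i j, 0 ≤ M i j) →
      ∀ x y : Fin n → ℝ, (∀ j, x j ≤ y j) → ∀ i, M.mulVec x i ≤ M.mulVec y i := by
    intro M hM x y hxy i
    simp only [Matrix.mulVec, dotProduct]
    exact Finset.sum_le_sum fun j _ => mul_le_mul_of_nonneg_left (hxy j) (hM i j)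
  -- key monotonicity property of (1 - R)
  have hmono : ∀ x : Fin n → ℝ, (∀ i, 0 ≤ (1 - R).mulVec x i) → ∀ i, 0 ≤ x i := by
    intro x hx i
    have hRx : ∀ i, R.mulVec x i ≤ x i := by
      intro i
      have := hx i
      rw [Matrix.sub_mulVec, Matrix.one_mulVec] at this
      simpa using this
    have hiter : ∀ m : ℕ, ∀ i, ((R ^ m).mulVec x) i ≤ x i := by
      intro m
      induction m with
      | zero => intro i; simp [pow_zero, Matrix.one_mulVec]
      | succ m ih =>
        intro i
        have h1 : ((R ^ (m+1)).mulVec x) i = ((R ^ m).mulVec (R.mulVec x)) i := by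
          rw [pow_succ, ← Matrix.mulVec_mulVec]
        rw [h1]
        exact (hmulVec_mono (R ^ m) (hpow_nonneg m) _ _ hRx i).trans (ih i)
    -- (R^m x)_i → 0
    have htend : Tendsto (fun m => ((R ^ m).mulVec x) i) atTop (nhds 0) := by
      have : ∀ m, ((R ^ m).mulVec x) i = ∑ j, (R ^ m) i j * x j := by
        intro m; simp [Matrix.mulVec, dotProduct]
      simp only [this]
      have : Tendsto (fun m => ∑ j, (R ^ m) i j * x j) atTop (nhds (∑ j : Fin n, 0 * x j)) := by
        exact tendsto_finset_sum _ fun j _ =>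
          (pow_entry_tendsto_cni R hρ i j).mul tendsto_const_nhds
      simpa using this
    exact le_of_tendsto htend (Eventually.of_forall fun m => hiter m i)
  -- (1 - R) is invertible
  have hinj : Function.Injective (1 - R).mulVec := by
    intro x y hxy
    have hz : (1 - R).mulVec (x - y) = 0 := by
      rw [Matrix.mulVec_sub, hxy, sub_self]
    have h1 : ∀ i, 0 ≤ (x - y) i := hmono _ (by rw [hz]; intro i; simp)
    have h2 : ∀ i, 0 ≤ (y - x) i := by
      apply hmono
      have : (1 - R).mulVec (y - x) = 0 := by
        rw [Matrix.mulVec_sub, hxy, sub_self]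
      rw [this]; intro i; simp
    funext i
    have := h1 i
    have := h2 i
    simp only [Pi.sub_apply, sub_nonneg] at *
    linarith
  have hUnit : IsUnit (1 - R) := Matrix.mulVec_injective_iff_isUnit.mp hinj
  have hUnitDet : IsUnit (1 - R).det := (Matrix.isUnit_iff_isUnit_det _).mp hUnit
  have hbr : (1 - R).mulVec btil = r := by
    rw [hb, Matrix.mulVec_mulVec, Matrix.mul_nonsing_inv _ hUnitDet, Matrix.one_mulVec]
  -- btil is nonnegative
  have hbtil_nonneg : ∀ i, 0 ≤ btil i := hmono btil (by rw [hbr]; exact hr)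
  -- ℓ btil = btil
  have hℓbtil : ∀ i, ℓ btil i = btil i := by
    intro i
    have := congrFun hbr i
    rw [Matrix.sub_mulVec, Matrix.one_mulVec] at this
    simp only [Pi.sub_apply] at this
    rw [hℓ]
    simp only [Pi.add_apply]
    linarith
  -- btil ≤ β
  have hbtil_le_β : ∀ i, btil i ≤ β i := by
    have h1 : ∀ i, 0 ≤ (1 - R).mulVec (β - btil) i := by
      intro i
      rw [Matrix.mulVec_sub, hbr]
      have h2 := hβv i
      rw [hℓ] at h2
      simp only [Pi.add_apply] at h2
      have h3 : ((1 - R).mulVec β) i = β i - R.mulVec β i := by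
        rw [Matrix.sub_mulVec, Matrix.one_mulVec]; simp
      simp only [Pi.sub_apply, h3]
      have := hv i
      linarith
    intro i
    have := hmono _ h1 i
    simpa [sub_nonneg] using this
  -- the iterates of β
  set a : ℕ → (Fin n → ℝ) := fun k => f^[k] β with ha
  have ha_nonneg : ∀ k i, 0 ≤ a k i := by
    intro k
    induction k with
    | zero => exact fun i => (hβ i).le
    | succ k ih =>
      intro i
      rw [ha]
      simp only [Function.iterate_succ_apply']
      exact hmap _ ih i
  have hfβ : ∀ i, f β i ≤ β i := by
    intro i
    have h1 := hfℓ β (fun i => (hβ i).le) i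
    have h2 := hβv i
    have := hv i
    linarith
  have ha_dec : ∀ k i, a (k+1) i ≤ a k i := by
    intro k
    induction k with
    | zero => simpa [ha] using hfβ
    | succ k ih =>
      intro i
      have h := hCNI (a (k+1)) (a k) (ha_nonneg (k+1)) ih i
      show f^[k+1+1] β i ≤ f^[k+1] β i
      simp only [ha, Function.iterate_succ_apply'] at h ⊢
      exact h
  have ha_anti : ∀ i, Antitone fun k => a k i := fun i =>
    antitone_nat_of_succ_le fun k => ha_dec k i
  -- the limit b
  set b : Fin n → ℝ := fun i => ⨅ k, a k i with hbdef
  have hbdd : ∀ i, BddBelow (Set.range fun k => a k i) :=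
    fun i => ⟨0, fun x ⟨k, hk⟩ => hk ▸ ha_nonneg k i⟩
  have htend_a : ∀ i, Tendsto (fun k => a k i) atTop (nhds (b i)) := fun i =>
    tendsto_atTop_ciInf (ha_anti i) (hbdd i)
  have htendA : Tendsto a atTop (nhds b) := tendsto_pi_nhds.mpr htend_a
  have hb_nonneg : ∀ i, 0 ≤ b i := fun i => le_ciInf fun k => ha_nonneg k i
  have hb_le_a : ∀ k i, b i ≤ a k i := fun k i => ciInf_le (hbdd i) k
  -- b is a fixed point of f
  have hfb : f b = b := by
    have hbS : b ∈ {x : Fin n → ℝ | ∀ i, 0 ≤ x i} := hb_nonneg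
    have hcw : ContinuousWithinAt f {x | ∀ i, 0 ≤ x i} b := hcont b hbS
    have htendin : Tendsto a atTop (nhdsWithin b {x : Fin n → ℝ | ∀ i, 0 ≤ x i}) :=
      tendsto_nhdsWithin_iff.mpr ⟨htendA, Eventually.of_forall fun k => ha_nonneg k⟩
    have h1 : Tendsto (fun k => f (a k)) atTop (nhds (f b)) := hcw.tendsto.comp htendin
    have h2 : Tendsto (fun k => f (a k)) atTop (nhds b) := by
      have : (fun k => f (a k)) = fun k => a (k+1) := by
        funext k; rw [ha]; simp [Function.iterate_succ_apply']
      rw [this]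
      exact htendA.comp (tendsto_add_atTop_nat 1)
    exact tendsto_nhds_unique h1 h2
  -- b ≤ btil
  have hb_le_btil : ∀ i, b i ≤ btil i := by
    have h1 : ∀ i, 0 ≤ (1 - R).mulVec (btil - b) i := by
      intro i
      rw [Matrix.mulVec_sub, hbr]
      have h2 : f b i ≤ ℓ b i := hfℓ b hb_nonneg i
      rw [hfb] at h2
      rw [hℓ] at h2
      simp only [Pi.add_apply] at h2
      have h3 : ((1 - R).mulVec b) i = b i - R.mulVec b i := by
        rw [Matrix.sub_mulVec, Matrix.one_mulVec]; simp
      simp only [Pi.sub_apply, h3]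
      linarith
    intro i
    have := hmono _ h1 i
    simpa [sub_nonneg] using this
  -- the iterates of btil are squeezed between b and a k
  set c : ℕ → (Fin n → ℝ) := fun k => f^[k] btil with hc
  have hc_nonneg : ∀ k i, 0 ≤ c k i := by
    intro k
    induction k with
    | zero => exact hbtil_nonneg
    | succ k ih =>
      intro i
      rw [hc]
      simp only [Function.iterate_succ_apply']
      exact hmap _ ih i
  have hsqueeze : ∀ k, (∀ i, b i ≤ c k i) ∧ (∀ i, c k i ≤ a k i) := by
    intro k
    induction k with
    | zero => exact ⟨hb_le_btil, hbtil_le_β⟩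
    | succ k ih =>
      constructor
      · intro i
        have h1 : f b i ≤ f (c k) i := hCNI b (c k) hb_nonneg ih.1 i
        rw [hfb] at h1
        show b i ≤ f^[k+1] btil i
        simp only [hc, Function.iterate_succ_apply'] at h1 ⊢
        exact h1
      · intro i
        have h1 : f (c k) i ≤ f (a k) i := hCNI (c k) (a k) (hc_nonneg k) ih.2 i
        show f^[k+1] btil i ≤ f^[k+1] β i
        simp only [hc, ha, Function.iterate_succ_apply'] at h1 ⊢
        exact h1
  have htend_c : Tendsto c atTop (nhds b) := by
    rw [tendsto_pi_nhds]
    intro i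
    exact tendsto_of_tendsto_of_tendsto_of_le_of_le tendsto_const_nhds (htend_a i)
      (fun k => (hsqueeze k).1 i) (fun k => (hsqueeze k).2 i)
  exact ⟨b, htendA, htend_c, hb_le_btil⟩
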